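/- The ratio Φ(x)/φ(x) is strictly increasing on ℝ, where Φ and φ are the CDF and PDF of the standard normal distribution. -/
import Mathlib

open MeasureTheory Real Set

/-- Standard normal PDF. -/
noncomputable def stdPdf (x : ℝ) : ℝ := Real.exp (-(x ^ 2) / 2) / Real.sqrt (2 * Real.pi)

/-- Standard normal CDF. -/
noncomputable def stdCdf (x : ℝ) : ℝ := ∫ t in Set.Iic x, stdPdf t

lemma stdPdf_pos (x : ℝ) : 0 < stdPdf x := by
  unfold stdPdf
  positivity

lemma exp_shift_integrableOn (x : ℝ) :
    IntegrableOn (fun s : ℝ => Real.exp (-(s ^ 2) / 2 - x * s)) (Set.Iic 0) := by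
  have h : Integrable (fun s : ℝ => Real.exp (x ^ 2 / 2) * Real.exp (-(1/2) * (s + x) ^ 2)) := by
    exact ((integrable_exp_neg_mul_sq (by norm_num : (0:ℝ) < 1/2)).comp_add_right x).const_mul _
  have h2 : (fun s : ℝ => Real.exp (-(s ^ 2) / 2 - x * s)) =
      fun s : ℝ => Real.exp (x ^ 2 / 2) * Real.exp (-(1/2) * (s + x) ^ 2) := by
    funext s
    rw [← Real.exp_add]
    ring_nf
  rw [h2]
  exact h.integrableOn

lemma ratio_eq (x : ℝ) :
    stdCdf x / stdPdf x = ∫ s in Set.Iic (0:ℝ), Real.exp (-(s ^ 2) / 2 - x * s) := by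
  have h1 : stdCdf x / stdPdf x = ∫ t in Set.Iic x, Real.exp (-(t ^ 2) / 2 + x ^ 2 / 2) := by
    rw [stdCdf, ← integral_div]
    congr 1
    funext t
    have h : Real.sqrt (2 * Real.pi) ≠ 0 := by positivity
    rw [stdPdf, stdPdf, div_div_div_comm, div_self h, div_one, ← Real.exp_sub]
    ring_nf
  rw [h1]
  -- translate: t = s + x
  have h2 : (∫ t in Set.Iic x, Real.exp (-(t ^ 2) / 2 + x ^ 2 / 2)) =
      ∫ s in Set.Iic (0:ℝ), Real.exp (-((s + x) ^ 2) / 2 + x ^ 2 / 2) := by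
    rw [← integral_indicator measurableSet_Iic, ← integral_indicator measurableSet_Iic]
    rw [← MeasureTheory.integral_add_right_eq_self
      (fun t => (Set.Iic x).indicator (fun t => Real.exp (-(t ^ 2) / 2 + x ^ 2 / 2)) t) x]
    congr 1
    funext s
    by_cases hs : s ≤ 0
    · rw [Set.indicator_of_mem (by simpa using hs), Set.indicator_of_mem (by simpa using hs)]
    · rw [Set.indicator_of_notMem (by simpa using hs), Set.indicator_of_notMem (by simpa using hs)]
  rw [h2]
  congr 1
  funext s
  congr 1
  ring

theorem cdf_div_pdf_strictMono : StrictMono (fun x : ℝ => stdCdf x / stdPdf x) := by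
  intro x y hxy
  simp only [ratio_eq]
  have hix := exp_shift_integrableOn x
  have hiy := exp_shift_integrableOn y
  have hsub : (0:ℝ) < ∫ s in Set.Iic (0:ℝ),
      (Real.exp (-(s ^ 2) / 2 - y * s) - Real.exp (-(s ^ 2) / 2 - x * s)) := by
    have hsup : Set.Iio (0:ℝ) ⊆
        (Function.support fun s => Real.exp (-(s ^ 2) / 2 - y * s)
          - Real.exp (-(s ^ 2) / 2 - x * s)) ∩ Set.Iic 0 := by
      intro s hs
      have hs' : s < 0 := hs
      refine ⟨?_, le_of_lt hs'⟩
      simp only [Function.mem_support]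
      have h1 : y * s < x * s := by nlinarith
      have h2 : Real.exp (-(s ^ 2) / 2 - x * s) < Real.exp (-(s ^ 2) / 2 - y * s) :=
        Real.exp_lt_exp.2 (by linarith)
      intro h; linarith [h2, sub_eq_zero.mp h]
    have hnn : 0 ≤ᵐ[volume.restrict (Set.Iic (0:ℝ))]
        fun s => Real.exp (-(s ^ 2) / 2 - y * s) - Real.exp (-(s ^ 2) / 2 - x * s) := by
      rw [Filter.EventuallyLE, ae_restrict_iff' measurableSet_Iic]
      refine ae_of_all _ fun s hs => ?_
      have hs' : s ≤ 0 := hs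
      have h1 : y * s ≤ x * s := by nlinarith
      simp only [Pi.zero_apply, sub_nonneg]
      exact Real.exp_le_exp.2 (by linarith)
    rw [setIntegral_pos_iff_support_of_nonneg_ae hnn (hiy.sub hix)]
    refine lt_of_lt_of_le ?_ (measure_mono hsup)
    rw [Real.volume_Iio]
    exact ENNReal.zero_lt_top
  have := integral_sub hiy hix
  rw [this] at hsub
  linarith
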